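/- Let P(m,n) = a m² + b m n + c n² + d m + e n + f₀ be an integral bivariate quadratic polynomial with a ≠ 0 and discriminant Δ = b² − 4ac = δ² for a positive integer δ. Write a₁ = gcd((b−δ)/2, a), a₂ = a/a₁, c₁ = (b−δ)/(2a₁), c₂ = (b+δ)/(2a₂), g₁ = gcd(a₂, c₁), g₂ = gcd(a₁, c₂), α = 2cd − be, β = 2ae − bd, γ₁ = (a₂α + c₁β)/Δ, γ₂ = (a₁α + c₂β)/Δ (rational numbers), and Γ = (a e² − b d e + c d²)/Δ + f₀ ∈ ℚ. Then the equation P(m,n) = Γ has a solution (m,n) ∈ ℤ² if and only if γ₁/g₁ is an integer or γ₂/g₂ is an integer. -/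

import Mathlib

/-- `T/D` is an integer iff `D ∣ T`. -/
lemma stmt_13_ratint (T D : ℤ) (hD : D ≠ 0) :
    (∃ z : ℤ, (T : ℚ) / (D : ℚ) = (z : ℚ)) ↔ D ∣ T := by
  have hD' : (D : ℚ) ≠ 0 := Int.cast_ne_zero.mpr hD
  constructor
  · rintro ⟨z, hz⟩
    refine ⟨z, ?_⟩
    rw [div_eq_iff hD'] at hz
    exact_mod_cast hz.trans (mul_comm _ _)
  · rintro ⟨k, rfl⟩
    refine ⟨k, ?_⟩
    push_cast
    rw [mul_comm]
    exact mul_div_cancel_right₀ _ hD'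

/-- Solvability of `D*(x*m + y*n) = T`. -/
lemma stmt_13_linsolv (x y D T : ℤ) :
    (∃ m n : ℤ, D * (x * m + y * n) = T) ↔ (D * (Int.gcd x y : ℤ)) ∣ T := by
  constructor
  · rintro ⟨m, n, rfl⟩
    exact mul_dvd_mul_left D
      (dvd_add ((Int.gcd_dvd_left x y).mul_right m) ((Int.gcd_dvd_right x y).mul_right n))
  · rintro ⟨k, rfl⟩
    refine ⟨Int.gcdA x y * k, Int.gcdB x y * k, ?_⟩
    have h := Int.gcd_eq_gcd_ab x y
    linear_combination -D * k * h

/-- Solvability criterion for `P(m,n) = Γ`, `Γ = Q(e,-d)/Δ + f₀`, for a bivariate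
quadratic polynomial of positive square discriminant `Δ = δ²` with `a ≠ 0`:
`P(m,n) = Γ` has an integer solution iff `γ₁/g₁ ∈ ℤ` or `γ₂/g₂ ∈ ℤ`. -/
theorem stmt_13 (a b c d e f₀ δ : ℤ) (ha : a ≠ 0) (hδ : 0 < δ)
    (hΔ : b ^ 2 - 4 * a * c = δ ^ 2)
    (a₁ a₂ c₁ c₂ g₁ g₂ α β : ℤ) (γ₁ γ₂ Γ : ℚ)
    (ha₁ : a₁ = Int.gcd ((b - δ) / 2) a) (ha₂ : a₂ = a / a₁)
    (hc₁ : c₁ = (b - δ) / (2 * a₁)) (hc₂ : c₂ = (b + δ) / (2 * a₂))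
    (hg₁ : g₁ = Int.gcd a₂ c₁) (hg₂ : g₂ = Int.gcd a₁ c₂)
    (hα : α = 2 * c * d - b * e) (hβ : β = 2 * a * e - b * d)
    (hγ₁ : γ₁ = ((a₂ * α + c₁ * β : ℤ) : ℚ) / ((δ ^ 2 : ℤ) : ℚ))
    (hγ₂ : γ₂ = ((a₁ * α + c₂ * β : ℤ) : ℚ) / ((δ ^ 2 : ℤ) : ℚ))
    (hΓ : Γ = ((a * e ^ 2 - b * d * e + c * d ^ 2 : ℤ) : ℚ) / ((δ ^ 2 : ℤ) : ℚ) +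
      (f₀ : ℚ)) :
    (∃ m n : ℤ,
        ((a * m ^ 2 + b * m * n + c * n ^ 2 + d * m + e * n + f₀ : ℤ) : ℚ) = Γ) ↔
      (∃ z : ℤ, γ₁ / (g₁ : ℚ) = (z : ℚ)) ∨ (∃ z : ℤ, γ₂ / (g₂ : ℚ) = (z : ℚ)) := by
  have hδ0 : δ ≠ 0 := hδ.ne'
  -- parity: b - δ is even
  have h1 : Even (b ^ 2 - δ ^ 2) := ⟨2 * (a * c), by linarith⟩
  have h2 : Even b ↔ Even δ := by
    have := (Int.even_sub).mp h1
    simpa [Int.even_pow] using this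
  obtain ⟨r, hr⟩ : Even (b - δ) := (Int.even_sub).mpr h2
  have hbr : b = 2 * r + δ := by linarith
  have ha₁' : a₁ = Int.gcd r a := by
    rw [ha₁, show (b - δ) / 2 = r from by omega]
  have hgne : Int.gcd r a ≠ 0 := fun h => ha (Int.gcd_eq_zero_iff.mp h).2
  have ha₁pos : 0 < a₁ := by rw [ha₁']; omega
  have hdvdr : a₁ ∣ r := ha₁' ▸ Int.gcd_dvd_left r a
  have hdvda : a₁ ∣ a := ha₁' ▸ Int.gcd_dvd_right r a
  have hA : a = a₁ * a₂ := by rw [ha₂]; exact (Int.mul_ediv_cancel' hdvda).symm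
  have hc₁' : c₁ = r / a₁ := by
    rw [hc₁, show b - δ = 2 * r by linarith,
      Int.mul_ediv_mul_of_pos _ _ (by norm_num : (0:ℤ) < 2)]
  have hR : r = a₁ * c₁ := by rw [hc₁']; exact (Int.mul_ediv_cancel' hdvdr).symm
  have cop : Int.gcd c₁ a₂ = 1 := by
    rw [hc₁', ha₂, ha₁']
    exact Int.gcd_div_gcd_div_gcd (by omega)
  have hg₁1 : g₁ = 1 := by
    rw [hg₁, Int.gcd_comm, cop]
    norm_num
  have hrs : r * (r + δ) = a * c := by
    have h4 : 4 * (r * (r + δ)) = 4 * (a * c) := by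
      linear_combination hΔ - (b + 2 * r + δ) * hbr
    exact mul_left_cancel₀ (by norm_num : (4:ℤ) ≠ 0) h4
  have ha₂0 : a₂ ≠ 0 := by
    intro h
    exact ha (by rw [hA, h, mul_zero])
  have key : c₁ * (r + δ) = a₂ * c := by
    apply mul_left_cancel₀ (show a₁ ≠ 0 by omega)
    linear_combination hrs - (r + δ) * hR + c * hA
  have ha₂dvd : a₂ ∣ r + δ := by
    have hco : IsCoprime a₂ c₁ := by
      rw [Int.isCoprime_iff_gcd_eq_one, Int.gcd_comm]
      exact cop
    exact hco.dvd_of_dvd_mul_left ⟨c, key⟩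
  have hc₂' : c₂ = (r + δ) / a₂ := by
    rw [hc₂, show b + δ = 2 * (r + δ) by linarith,
      Int.mul_ediv_mul_of_pos _ _ (by norm_num : (0:ℤ) < 2)]
  have hS : r + δ = a₂ * c₂ := by rw [hc₂']; exact (Int.mul_ediv_cancel' ha₂dvd).symm
  have hC : c = c₁ * c₂ := by
    apply mul_left_cancel₀ ha
    calc a * c = r * (r + δ) := hrs.symm
      _ = (a₁ * c₁) * (a₂ * c₂) := by rw [← hR, ← hS]
      _ = a * (c₁ * c₂) := by rw [hA]; ring
  have hb2 : b = a₁ * c₁ + a₂ * c₂ := by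
    rw [← hR, ← hS]; linarith
  have hd2 : δ = a₂ * c₂ - a₁ * c₁ := by
    rw [← hR, ← hS]; linarith
  have hg₂pos : 0 < g₂ := by
    have : Int.gcd a₁ c₂ ≠ 0 := fun h => (by omega : a₁ ≠ 0) (Int.gcd_eq_zero_iff.mp h).1
    rw [hg₂]; omega
  have hδq : ((δ : ℤ) : ℚ) ≠ 0 := Int.cast_ne_zero.mpr hδ0
  set T₁ : ℤ := d * c₁ - e * a₂ with hT₁
  set T₂ : ℤ := e * a₁ - d * c₂ with hT₂
  -- the factorization identity
  have main : ∀ m n : ℤ,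
      (((a * m ^ 2 + b * m * n + c * n ^ 2 + d * m + e * n + f₀ : ℤ) : ℚ) = Γ) ↔
      (δ * (a₂ * m + c₁ * n) = T₁ ∨ δ * (a₁ * m + c₂ * n) = T₂) := by
    intro m n
    have hid : (δ * (a₂ * m + c₁ * n) - T₁) * (δ * (a₁ * m + c₂ * n) - T₂) =
        (a * m ^ 2 + b * m * n + c * n ^ 2 + d * m + e * n + f₀) * δ ^ 2 -
        (a * e ^ 2 - b * d * e + c * d ^ 2 + δ ^ 2 * f₀) := by
      rw [hT₁, hT₂, hA, hb2, hC, hd2]; ring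
    have hδ2q : ((δ ^ 2 : ℤ) : ℚ) ≠ 0 := Int.cast_ne_zero.mpr (pow_ne_zero 2 hδ0)
    rw [hΓ, ← sub_eq_zero]
    have hstep : ((a * m ^ 2 + b * m * n + c * n ^ 2 + d * m + e * n + f₀ : ℤ) : ℚ) -
        (((a * e ^ 2 - b * d * e + c * d ^ 2 : ℤ) : ℚ) / ((δ ^ 2 : ℤ) : ℚ) + (f₀ : ℚ)) =
        (((δ * (a₂ * m + c₁ * n) - T₁) * (δ * (a₁ * m + c₂ * n) - T₂) : ℤ) : ℚ) /
          ((δ ^ 2 : ℤ) : ℚ) := by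
      rw [hid]
      push_cast
      field_simp
    rw [hstep, div_eq_zero_iff]
    simp only [hδ2q, or_false]
    rw [Int.cast_eq_zero, mul_eq_zero, sub_eq_zero, sub_eq_zero]
  -- first condition
  have sol1 : (∃ m n : ℤ, δ * (a₂ * m + c₁ * n) = T₁) ↔ (∃ z : ℤ, γ₁ / (g₁ : ℚ) = (z : ℚ)) := by
    rw [stmt_13_linsolv, Int.gcd_comm, cop]
    have hγ₁' : γ₁ = (T₁ : ℚ) / (δ : ℚ) := by
      have hid2 : a₂ * α + c₁ * β = δ * T₁ := by
        rw [hα, hβ, hT₁, hA, hb2, hC, hd2]; ring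
      rw [hγ₁, hid2]
      push_cast
      rw [pow_two, mul_div_mul_left _ _ hδq]
    rw [hγ₁', hg₁1]
    norm_num
    exact (stmt_13_ratint T₁ δ hδ0).symm
  -- second condition
  have sol2 : (∃ m n : ℤ, δ * (a₁ * m + c₂ * n) = T₂) ↔ (∃ z : ℤ, γ₂ / (g₂ : ℚ) = (z : ℚ)) := by
    rw [stmt_13_linsolv, ← hg₂]
    have hγ₂' : γ₂ = (T₂ : ℚ) / (δ : ℚ) := by
      have hid2 : a₁ * α + c₂ * β = δ * T₂ := by
        rw [hα, hβ, hT₂, hA, hb2, hC, hd2]; ring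
      rw [hγ₂, hid2]
      push_cast
      rw [pow_two, mul_div_mul_left _ _ hδq]
    have : γ₂ / (g₂ : ℚ) = ((T₂ : ℤ) : ℚ) / ((δ * g₂ : ℤ) : ℚ) := by
      rw [hγ₂']
      push_cast
      rw [div_div]
    rw [this]
    exact (stmt_13_ratint T₂ (δ * g₂) (by positivity)).symm
  constructor
  · rintro ⟨m, n, h⟩
    rcases (main m n).1 h with h | h
    · exact Or.inl (sol1.1 ⟨m, n, h⟩)
    · exact Or.inr (sol2.1 ⟨m, n, h⟩)
  · rintro (h | h)
    · obtain ⟨m, n, hmn⟩ := sol1.2 h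
      exact ⟨m, n, (main m n).2 (Or.inl hmn)⟩
    · obtain ⟨m, n, hmn⟩ := sol2.2 h
      exact ⟨m, n, (main m n).2 (Or.inr hmn)⟩
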